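/- Necessary and sufficient conditions for the discrete strict weak maximum principle: The pair (K_ff, K_fp) possesses the discrete strict weak maximum principle — i.e., for every admissible triple (c_f, c_p, r) with r ⪯ 0 one has max[c] = max[c_p] — if and only if all three of the following hold: (a) K_ff⁻¹ ⪰ 0; (b) −K_ff⁻¹ K_fp ⪰ 0; (c) −K_ff⁻¹ K_fp 1 = 1. -/

import Mathlib

/-- Necessary and sufficient conditions on the stiffness matrices to satisfy
the discrete strict weak maximum principle. -/
theorem discrete_strict_weak_maximum_principle_iff
    (nf np : ℕ) (hnf : 1 ≤ nf) (hnp : 1 ≤ np)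
    (Kff : Matrix (Fin nf) (Fin nf) ℝ) (Kfp : Matrix (Fin nf) (Fin np) ℝ)
    (hKff : IsUnit Kff.det) :
    (∀ (cf : Fin nf → ℝ) (cp : Fin np → ℝ) (r : Fin nf → ℝ),
        Kff.mulVec cf + Kfp.mulVec cp = r → r ≤ 0 →
        max (⨆ i, cf i) (⨆ j, cp j) = (⨆ j, cp j)) ↔
    ((∀ i j, 0 ≤ Kff⁻¹ i j) ∧
     (∀ i j, 0 ≤ (-(Kff⁻¹ * Kfp)) i j) ∧
     (∀ i, (-(Kff⁻¹ * Kfp)).mulVec 1 i = 1)) := by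
  haveI : Nonempty (Fin nf) := ⟨⟨0, hnf⟩⟩
  haveI : Nonempty (Fin np) := ⟨⟨0, hnp⟩⟩
  set A := Kff⁻¹ with hAdef
  set B := -(Kff⁻¹ * Kfp) with hBdef
  have hAK : A * Kff = 1 := Matrix.nonsing_inv_mul Kff hKff
  have hKA : Kff * A = 1 := Matrix.mul_nonsing_inv Kff hKff
  have hKB : Kff * B = -Kfp := by
    rw [hBdef, Matrix.mul_neg, ← Matrix.mul_assoc, hKA, Matrix.one_mul]
  have hadm : ∀ (cp : Fin np → ℝ) (r : Fin nf → ℝ),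
      Kff.mulVec (A.mulVec r + B.mulVec cp) + Kfp.mulVec cp = r := by
    intro cp r
    rw [Matrix.mulVec_add, Matrix.mulVec_mulVec, Matrix.mulVec_mulVec, hKA,
      Matrix.one_mulVec, hKB, Matrix.neg_mulVec]
    abel
  constructor
  · intro H
    have key : ∀ (cp : Fin np → ℝ) (r : Fin nf → ℝ), r ≤ 0 →
        ∀ i, (A.mulVec r + B.mulVec cp) i ≤ ⨆ j, cp j := by
      intro cp r hr i
      have h := H _ cp r (hadm cp r) hr
      have h2 : (⨆ i, (A.mulVec r + B.mulVec cp) i) ≤ ⨆ j, cp j :=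
        max_eq_right_iff.mp h
      exact le_trans (le_ciSup (Set.Finite.bddAbove (Set.finite_range _)) i) h2
    -- (c) : row sums of B equal 1
    have hc : ∀ i, B.mulVec 1 i = 1 := by
      intro i
      have h1 := key 1 0 le_rfl i
      have h2 := key (-1) 0 le_rfl i
      have e1 : (⨆ j : Fin np, (1 : Fin np → ℝ) j) = 1 := by
        simp [ciSup_const]
      have e2 : (⨆ j : Fin np, (-1 : Fin np → ℝ) j) = -1 := by
        simp [ciSup_const]
      rw [e1] at h1
      rw [e2] at h2
      simp only [Matrix.mulVec_zero, Matrix.mulVec_neg, Pi.add_apply, Pi.zero_apply,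
        Pi.neg_apply, zero_add] at h1 h2
      linarith
    -- (b) : B ≥ 0
    have hb : ∀ i j, 0 ≤ B i j := by
      intro i j
      set cp : Fin np → ℝ := (1 : Fin np → ℝ) - Pi.single j 2 with hcp
      have h1 := key cp 0 le_rfl i
      have hsup : (⨆ j', cp j') ≤ 1 := by
        apply ciSup_le
        intro j'
        rw [hcp]
        by_cases hj : j' = j
        · subst hj; simp [Pi.single_apply]
        · simp [Pi.single_apply, hj]
      have hval : (A.mulVec 0 + B.mulVec cp) i = 1 - 2 * B i j := by
        rw [hcp, Matrix.mulVec_zero, Matrix.mulVec_sub, Matrix.mulVec_single]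
        simp only [Pi.add_apply, Pi.zero_apply, Pi.sub_apply, zero_add]
        rw [hc i]
        simp only [Pi.smul_apply, Matrix.col_apply, MulOpposite.smul_eq_mul_unop, MulOpposite.unop_op]
        ring
      rw [hval] at h1
      have := le_trans h1 hsup
      linarith
    -- (a) : A ≥ 0
    have ha : ∀ i j, 0 ≤ A i j := by
      intro i j
      have hr : (-Pi.single j 1 : Fin nf → ℝ) ≤ 0 := by
        intro k
        simp only [Pi.neg_apply, Pi.zero_apply, neg_nonpos]
        by_cases hk : k = j
        · subst hk; simp
        · simp [Pi.single_apply, hk]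
      have h1 := key 0 (-Pi.single j 1) hr i
      have hsup : (⨆ j' : Fin np, (0 : Fin np → ℝ) j') = 0 := by
        simp [ciSup_const]
      rw [hsup] at h1
      have hval : (A.mulVec (-Pi.single j 1) + B.mulVec 0) i = -(A i j) := by
        rw [Matrix.mulVec_zero, Matrix.mulVec_neg, Matrix.mulVec_single]
        simp
      rw [hval] at h1
      linarith
    exact ⟨ha, hb, hc⟩
  · rintro ⟨ha, hb, hc⟩ cf cp r heq hr
    have hcf : cf = A.mulVec r + B.mulVec cp := by
      have h := congrArg A.mulVec heq
      rw [Matrix.mulVec_add, Matrix.mulVec_mulVec, Matrix.mulVec_mulVec, hAK,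
        Matrix.one_mulVec] at h
      rw [hBdef, Matrix.neg_mulVec, ← h]
      abel
    apply max_eq_right
    apply ciSup_le
    intro i
    rw [hcf]
    simp only [Pi.add_apply]
    have hA0 : A.mulVec r i ≤ 0 := by
      simp only [Matrix.mulVec, dotProduct]
      apply Finset.sum_nonpos
      intro j _
      exact mul_nonpos_of_nonneg_of_nonpos (ha i j) (hr j)
    have hBS : B.mulVec cp i ≤ ⨆ j, cp j := by
      have h1 : B.mulVec cp i ≤ B.mulVec (fun _ => ⨆ j, cp j) i := by
        simp only [Matrix.mulVec, dotProduct]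
        apply Finset.sum_le_sum
        intro j _
        exact mul_le_mul_of_nonneg_left
          (le_ciSup (Set.Finite.bddAbove (Set.finite_range _)) j) (hb i j)
      have h2 : B.mulVec (fun _ => ⨆ j, cp j) i = ⨆ j, cp j := by
        have : (fun _ : Fin np => ⨆ j, cp j) = (⨆ j, cp j) • (1 : Fin np → ℝ) := by
          funext k; simp
        rw [this, Matrix.mulVec_smul]
        simp [hc i]
      rw [h2] at h1
      exact h1
    linarith
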